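/- arXiv:2604.19493 — 2 statements merged into one kernel-verified Lean document; each statement's English description precedes it below -/
import Mathlib

section
/- The multivariate generalised Gaussian density integrates to one: for every integer m ≥ 1, every β > 0, every μ ∈ ℝ^m and every symmetric positive definite m×m real matrix Σ, one has ∫_{ℝ^m} [βΓ(m/2) / (π^{m/2} Γ(m/(2β)) 2^{m/(2β)} (det Σ)^{1/2})] · exp(−(1/2)((x−μ)ᵀ Σ^{−1} (x−μ))^β) dx = 1, where the integral is with respect to Lebesgue measure on ℝ^m. -/
open MeasureTheory Matrix Real
open scoped MatrixOrder

/-- The multivariate generalised Gaussian density integrates to one: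
for every integer `m ≥ 1`, every `β > 0`, every `μ ∈ ℝ^m` and every symmetric positive
definite `m × m` real matrix `Σ`,
`∫_{ℝ^m} [β Γ(m/2) / (π^{m/2} Γ(m/(2β)) 2^{m/(2β)} (det Σ)^{1/2})]
    exp(−(1/2)((x−μ)ᵀ Σ⁻¹ (x−μ))^β) dx = 1`,
with respect to Lebesgue measure on `ℝ^m`. -/
theorem mggd_density_integrates_to_one
    (m : ℕ) (hm : 1 ≤ m) (β : ℝ) (hβ : 0 < β)
    (μ : Fin m → ℝ) (S : Matrix (Fin m) (Fin m) ℝ) (hS : S.PosDef) :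
    ∫ x : Fin m → ℝ,
      (β * Real.Gamma ((m : ℝ) / 2) /
          (Real.pi ^ ((m : ℝ) / 2) * Real.Gamma ((m : ℝ) / (2 * β)) *
            (2 : ℝ) ^ ((m : ℝ) / (2 * β)) * Real.sqrt S.det)) *
        Real.exp (-(1 / 2) * ((x - μ) ⬝ᵥ (S⁻¹ *ᵥ (x - μ))) ^ β) = 1 := by
  have hm0 : (0:ℝ) < m := by exact_mod_cast hm
  set c : ℝ := β * Real.Gamma ((m : ℝ) / 2) /
          (Real.pi ^ ((m : ℝ) / 2) * Real.Gamma ((m : ℝ) / (2 * β)) *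
            (2 : ℝ) ^ ((m : ℝ) / (2 * β)) * Real.sqrt S.det) with hc
  set F : (Fin m → ℝ) → ℝ := fun x => Real.exp (-(1 / 2) * (x ⬝ᵥ (S⁻¹ *ᵥ x)) ^ β) with hF
  -- continuity of the integrand
  have hFcont : Continuous F := by
    apply Real.continuous_exp.comp
    apply Continuous.mul continuous_const
    apply Continuous.rpow_const
    · exact (continuous_id.dotProduct (continuous_const.matrix_mulVec continuous_id))
    · exact fun _ => Or.inr hβ.le
  -- kill the translation
  have h0 : (∫ x : Fin m → ℝ,
      c * Real.exp (-(1 / 2) * ((x - μ) ⬝ᵥ (S⁻¹ *ᵥ (x - μ))) ^ β)) = c * ∫ x, F x := by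
    rw [← integral_const_mul]
    exact integral_sub_right_eq_self (fun x => c * F x) μ
  rw [h0]
  -- the square root of S
  set A : Matrix (Fin m) (Fin m) ℝ := CFC.sqrt S with hA
  have hAA : A * A = S := CFC.sqrt_mul_sqrt_self S hS.posSemidef.nonneg
  have hdetS : 0 < S.det := hS.det_pos
  have hdetA2 : A.det * A.det = S.det := by rw [← Matrix.det_mul, hAA]
  have hdetA : A.det ≠ 0 := by
    intro h; rw [h, mul_zero] at hdetA2; exact hdetS.ne hdetA2
  have hsqrtdet : Real.sqrt S.det = |A.det| := by
    rw [← hdetA2, ← sq, Real.sqrt_sq_eq_abs]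
  have hAt : Aᵀ = A := by
    have := (CFC.sqrt_nonneg S).posSemidef.isHermitian
    rwa [Matrix.IsHermitian, conjTranspose_eq_transpose_of_trivial] at this
  -- the quadratic form identity
  have key : ∀ y : Fin m → ℝ, (A *ᵥ y) ⬝ᵥ S⁻¹ *ᵥ (A *ᵥ y) = y ⬝ᵥ y := by
    intro y
    have hSinv : S⁻¹ = A⁻¹ * A⁻¹ := by rw [← hAA, Matrix.mul_inv_rev]
    rw [hSinv, Matrix.mulVec_mulVec, Matrix.mul_assoc,
      Matrix.nonsing_inv_mul _ hdetA.isUnit, Matrix.mul_one,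
      Matrix.dotProduct_mulVec, ← Matrix.mulVec_transpose, Matrix.transpose_nonsing_inv, hAt,
      Matrix.mulVec_mulVec, Matrix.nonsing_inv_mul _ hdetA.isUnit, Matrix.one_mulVec]
  -- change of variables by A
  have h1 : ∫ x, F x = |A.det| * ∫ y : Fin m → ℝ, Real.exp (-(1 / 2) * (y ⬝ᵥ y) ^ β) := by
    have hlindet : LinearMap.det (Matrix.toLin' A) ≠ 0 := by
      rwa [LinearMap.det_toLin']
    have hmap := Measure.map_linearMap_addHaar_eq_smul_addHaar
      (volume : Measure (Fin m → ℝ)) hlindet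
    have h2 : ∫ y : Fin m → ℝ, Real.exp (-(1 / 2) * (y ⬝ᵥ y) ^ β)
        = ∫ y : Fin m → ℝ, F (Matrix.toLin' A y) := by
      congr 1; ext y
      rw [hF]; simp only [Matrix.toLin'_apply]
      rw [key y]
    have h3 : ∫ y : Fin m → ℝ, F (Matrix.toLin' A y)
        = ∫ x, F x ∂(Measure.map (Matrix.toLin' A) (volume : Measure (Fin m → ℝ))) := by
      rw [integral_map _ hFcont.aestronglyMeasurable]
      exact (Matrix.toLin' A).continuous_of_finiteDimensional.aemeasurable
    rw [h2, h3, hmap, integral_smul_measure, LinearMap.det_toLin',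
      ENNReal.toReal_ofReal (abs_nonneg _), smul_eq_mul, abs_inv, ← mul_assoc,
      mul_inv_cancel₀ (by simpa using hdetA), one_mul]
  rw [h1]
  -- pass to Euclidean space
  haveI : Nonempty (Fin m) := ⟨⟨0, hm⟩⟩
  have h4 : ∫ y : Fin m → ℝ, Real.exp (-(1 / 2) * (y ⬝ᵥ y) ^ β)
      = ∫ x : EuclideanSpace ℝ (Fin m), Real.exp (-(1 / 2) * ‖x‖ ^ (2 * β)) := by
    rw [← (EuclideanSpace.volume_preserving_symm_measurableEquiv_toLp (Fin m)).integral_comp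
      (MeasurableEquiv.toLp 2 (Fin m → ℝ)).symm.measurableEmbedding
      (fun y : Fin m → ℝ => Real.exp (-(1 / 2) * (y ⬝ᵥ y) ^ β))]
    congr 1; ext x
    have hxx : ((MeasurableEquiv.toLp 2 (Fin m → ℝ)).symm x) ⬝ᵥ
        ((MeasurableEquiv.toLp 2 (Fin m → ℝ)).symm x) = ‖x‖ ^ (2:ℕ) := by
      rw [EuclideanSpace.norm_eq, Real.sq_sqrt (by positivity)]
      simp [dotProduct, sq]
    rw [hxx, ← Real.rpow_natCast ‖x‖ 2, ← Real.rpow_mul (norm_nonneg x)]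
    norm_num
  rw [h4]
  haveI : Nontrivial (EuclideanSpace ℝ (Fin m)) := inferInstance
  have h5 := integral_fun_norm_addHaar (volume : Measure (EuclideanSpace ℝ (Fin m)))
    (fun r : ℝ => Real.exp (-(1 / 2) * r ^ (2 * β)))
  rw [h5]
  have hfr : Module.finrank ℝ (EuclideanSpace ℝ (Fin m)) = m := finrank_euclideanSpace_fin
  rw [hfr]
  -- radial integral
  have hrad : (∫ y in Set.Ioi (0:ℝ), y ^ (m - 1) • Real.exp (-(1 / 2) * y ^ (2 * β)))
      = (2:ℝ) ^ ((m:ℝ) / (2 * β)) * (1 / (2 * β)) * Real.Gamma ((m:ℝ) / (2 * β)) := by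
    have hcongr : ∀ y ∈ Set.Ioi (0:ℝ), y ^ (m - 1) • Real.exp (-(1 / 2) * y ^ (2 * β))
        = y ^ ((m:ℝ) - 1) * Real.exp (-(1/2) * y ^ (2 * β)) := by
      intro y hy
      rw [smul_eq_mul, ← Real.rpow_natCast y (m - 1), Nat.cast_sub hm, Nat.cast_one]
    rw [setIntegral_congr_fun measurableSet_Ioi hcongr,
      integral_rpow_mul_exp_neg_mul_rpow (by positivity) (by linarith) (by norm_num),
      sub_add_cancel]
    congr 1
    rw [one_div, Real.inv_rpow (by norm_num : (0:ℝ) ≤ 2),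
      ← Real.rpow_neg (by norm_num : (0:ℝ) ≤ 2)]
    congr 1; ring_nf
  rw [hrad]
  -- volume of the unit ball
  have hball : volume.real (Metric.ball (0 : EuclideanSpace ℝ (Fin m)) 1)
      = Real.pi ^ ((m:ℝ) / 2) / (((m:ℝ) / 2) * Real.Gamma ((m:ℝ) / 2)) := by
    rw [measureReal_def, EuclideanSpace.volume_ball]
    simp only [Fintype.card_fin, ENNReal.ofReal_one, one_pow, one_mul]
    rw [ENNReal.toReal_ofReal (by positivity)]
    rw [Real.Gamma_add_one (by positivity : ((m:ℝ)/2) ≠ 0)]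
    congr 1
    rw [Real.sqrt_eq_rpow, ← Real.rpow_natCast (Real.pi ^ ((1:ℝ)/2)) m,
      ← Real.rpow_mul Real.pi_pos.le]
    congr 1; ring
  rw [hball]
  -- final arithmetic
  have hΓ1 : 0 < Real.Gamma ((m:ℝ) / 2) := Real.Gamma_pos_of_pos (by positivity)
  have hΓ2 : 0 < Real.Gamma ((m:ℝ) / (2 * β)) := Real.Gamma_pos_of_pos (by positivity)
  have hπ : 0 < Real.pi ^ ((m:ℝ) / 2) := Real.rpow_pos_of_pos Real.pi_pos _
  have h2p : (0:ℝ) < (2:ℝ) ^ ((m:ℝ) / (2 * β)) := Real.rpow_pos_of_pos (by norm_num) _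
  have hAd : (0:ℝ) < |A.det| := abs_pos.mpr hdetA
  rw [hc, hsqrtdet, nsmul_eq_mul, smul_eq_mul]
  field_simp
end

section
/- Let m ≥ 1 be an integer, β > 0, μ ∈ ℝ^m, and Σ a symmetric positive definite m×m real matrix, and let X be distributed according to the MGGD(μ, Σ, β) density. Then the random variable W = (1/2)((X−μ)ᵀ Σ^{−1} (X−μ))^β has the Gamma distribution with shape m/(2β) and unit scale; that is, the pushforward of MGGD(μ, Σ, β) under x ↦ (1/2)((x−μ)ᵀ Σ^{−1} (x−μ))^β is the probability measure on (0, ∞) with Lebesgue density w ↦ w^{m/(2β)−1} e^{−w} / Γ(m/(2β)). -/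
open MeasureTheory Matrix Real

/-- The MGGD(μ, Σ, β) measure on ℝ^m: the measure with Lebesgue density
`[β Γ(m/2) / (π^{m/2} Γ(m/(2β)) 2^{m/(2β)} (det Σ)^{1/2})]
  exp(−(1/2)((x−μ)ᵀ Σ⁻¹ (x−μ))^β)`. -/
noncomputable def mggd (m : ℕ) (μ : Fin m → ℝ) (S : Matrix (Fin m) (Fin m) ℝ) (β : ℝ) :
    Measure (Fin m → ℝ) :=
  volume.withDensity fun x => ENNReal.ofReal
    (β * Real.Gamma ((m : ℝ) / 2) /
        (Real.pi ^ ((m : ℝ) / 2) * Real.Gamma ((m : ℝ) / (2 * β)) *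
          (2 : ℝ) ^ ((m : ℝ) / (2 * β)) * Real.sqrt S.det) *
      Real.exp (-(1 / 2) * ((x - μ) ⬝ᵥ (S⁻¹ *ᵥ (x - μ))) ^ β))

open MeasureTheory Measure Set Metric

open scoped MatrixOrder

local notation "dim" => Module.finrank ℝ

lemma lintegral_fun_norm_addHaar' {E : Type*} [NormedAddCommGroup E] [NormedSpace ℝ E]
    [MeasurableSpace E] [BorelSpace E] [FiniteDimensional ℝ E] [Nontrivial E]
    (μ : Measure E) [μ.IsAddHaarMeasure] (f : ℝ → ENNReal) (hf : Measurable f) :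
    ∫⁻ x, f ‖x‖ ∂μ = (dim E) * μ (ball 0 1) *
      ∫⁻ r in Ioi (0 : ℝ), ENNReal.ofReal (r ^ (dim E - 1)) * f r := by
  calc
    ∫⁻ x, f ‖x‖ ∂μ = ∫⁻ x : ({(0)}ᶜ : Set E), f ‖x.1‖ ∂(μ.comap (↑)) := by
      rw [lintegral_subtype_comap (measurableSet_singleton _).compl fun x => f ‖x‖,
        MeasureTheory.restrict_compl_singleton]
    _ = ∫⁻ p : sphere (0 : E) 1 × Ioi (0 : ℝ), f p.2
          ∂μ.toSphere.prod (.volumeIoiPow (dim E - 1)) :=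
      by simpa [homeomorphUnitSphereProd, homeomorphSphereProd] using
        μ.measurePreserving_homeomorphUnitSphereProd.lintegral_comp_emb
          (Homeomorph.measurableEmbedding _) (fun p => f p.2)
    _ = μ.toSphere univ * ∫⁻ r : Ioi (0 : ℝ), f r ∂(Measure.volumeIoiPow (dim E - 1)) := by
      rw [lintegral_prod (fun p : ↥(sphere (0:E) 1) × ↥(Ioi (0:ℝ)) => f p.2)
        (Measurable.aemeasurable (by exact hf.comp (measurable_subtype_coe.comp measurable_snd)))]
      simp [lintegral_const, mul_comm]
    _ = _ := by
      rw [Measure.toSphere_apply_univ]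
      congr 1
      rw [Measure.volumeIoiPow,
        lintegral_withDensity_eq_lintegral_mul _
          ((measurable_subtype_coe.pow_const _).ennreal_ofReal)
          (by exact hf.comp measurable_subtype_coe),
        ← lintegral_subtype_comap measurableSet_Ioi
          (fun r => ENNReal.ofReal (r ^ (dim E - 1)) * f r)]
      rfl

/-- if `X ~ MGGD(μ, Σ, β)` then `W = (1/2)((X−μ)ᵀ Σ⁻¹ (X−μ))^β` has the
Gamma distribution with shape `m/(2β)` and unit scale: the pushforward of `MGGD(μ, Σ, β)`
under `x ↦ (1/2)((x−μ)ᵀ Σ⁻¹ (x−μ))^β` is the measure on `(0, ∞)` with Lebesgue density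
`w ↦ w^{m/(2β)−1} e^{−w} / Γ(m/(2β))`. -/
theorem mggd_radial_gamma
    (m : ℕ) (hm : 1 ≤ m) (β : ℝ) (hβ : 0 < β)
    (μ : Fin m → ℝ) (S : Matrix (Fin m) (Fin m) ℝ) (hS : S.PosDef) :
    Measure.map (fun x : Fin m → ℝ => (1 / 2) * ((x - μ) ⬝ᵥ (S⁻¹ *ᵥ (x - μ))) ^ β)
        (mggd m μ S β)
      = (volume.restrict (Set.Ioi (0 : ℝ))).withDensity fun w => ENNReal.ofReal
          (w ^ ((m : ℝ) / (2 * β) - 1) * Real.exp (-w) / Real.Gamma ((m : ℝ) / (2 * β))) := by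
  have hβ' : β ≠ 0 := hβ.ne'
  set a : ℝ := (m : ℝ) / (2 * β) with ha_def
  set p : ℝ := 1 / (2 * β) with hp_def
  have hp : 0 < p := by positivity
  have hpm : p * m = a := by rw [hp_def, ha_def]; ring
  set c : ℝ := β * Real.Gamma ((m : ℝ) / 2) /
      (Real.pi ^ ((m : ℝ) / 2) * Real.Gamma a * (2 : ℝ) ^ a * Real.sqrt S.det) with hc_def
  -- the matrix square root
  set A : Matrix (Fin m) (Fin m) ℝ := CFC.sqrt S with hA_def
  have hAA : A * A = S := CFC.sqrt_mul_sqrt_self S hS.posSemidef.nonneg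
  have hAdet_sq : A.det * A.det = S.det := by rw [← Matrix.det_mul, hAA]
  have hSdet_pos : 0 < S.det := hS.det_pos
  have hAdetabs : |A.det| = Real.sqrt S.det := by
    rw [← Real.sqrt_sq_eq_abs, sq, hAdet_sq]
  have hAdet_ne : A.det ≠ 0 := by
    intro h
    rw [h, mul_zero] at hAdet_sq
    exact hSdet_pos.ne hAdet_sq
  have hAunit : IsUnit A.det := isUnit_iff_ne_zero.2 hAdet_ne
  have hAsymm : Aᵀ = A := by
    have h := (CFC.sqrt_nonneg S).posSemidef.isHermitian
    rwa [Matrix.IsHermitian, Matrix.conjTranspose_eq_transpose_of_trivial] at h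
  -- key quadratic form identity
  have hSinv : S⁻¹ = A⁻¹ * A⁻¹ := by rw [← hAA, Matrix.mul_inv_rev]
  have hASA : A * (S⁻¹ * A) = 1 := by
    rw [hSinv, Matrix.mul_assoc A⁻¹, Matrix.nonsing_inv_mul A hAunit, Matrix.mul_one,
      Matrix.mul_nonsing_inv A hAunit]
  have hSsymm : Sᵀ = S := by
    have h := hS.isHermitian
    rwa [Matrix.IsHermitian, Matrix.conjTranspose_eq_transpose_of_trivial] at h
  have key : ∀ y : Fin m → ℝ, (A *ᵥ y) ⬝ᵥ (S⁻¹ *ᵥ (A *ᵥ y)) = y ⬝ᵥ y := by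
    intro y
    rw [Matrix.mulVec_mulVec, Matrix.dotProduct_mulVec, ← Matrix.mulVec_transpose,
      Matrix.transpose_mul, Matrix.transpose_nonsing_inv, hSsymm, hAsymm,
      Matrix.mulVec_mulVec, Matrix.mul_assoc, hASA, Matrix.one_mulVec]
  -- the radial maps
  set φ : (Fin m → ℝ) → ℝ := fun x => (1 / 2) * ((x - μ) ⬝ᵥ (S⁻¹ *ᵥ (x - μ))) ^ β with hφ_def
  set ψ : (Fin m → ℝ) → ℝ := fun y => (1 / 2) * (y ⬝ᵥ y) ^ β with hψ_def
  set η : ℝ → ℝ := fun r => (1 / 2) * (r ^ 2) ^ β with hη_def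
  set ρ : ℝ → ℝ := fun w => (2 * w) ^ p with hρ_def
  have hQmeas : ∀ ν : Fin m → ℝ, Measurable fun x : Fin m → ℝ => (x - ν) ⬝ᵥ (S⁻¹ *ᵥ (x - ν)) := by
    intro ν
    simp only [dotProduct, Matrix.mulVec, Pi.sub_apply]
    exact Finset.measurable_sum _ fun i _ =>
      ((measurable_pi_apply i).sub measurable_const).mul
        (Finset.measurable_sum _ fun j _ =>
          measurable_const.mul ((measurable_pi_apply j).sub measurable_const))
  have hrpow : Continuous (fun t : ℝ => t ^ β) := Real.continuous_rpow_const hβ.le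
  have hφmeas : Measurable φ :=
    measurable_const.mul (hrpow.measurable.comp (hQmeas μ))
  have hdot : Measurable fun y : Fin m → ℝ => y ⬝ᵥ y :=
    Finset.measurable_sum _ fun i _ => (measurable_pi_apply i).mul (measurable_pi_apply i)
  have hψmeas : Measurable ψ :=
    measurable_const.mul (hrpow.measurable.comp hdot)
  have hηmeas : Measurable η :=
    measurable_const.mul (hrpow.measurable.comp (measurable_id.pow_const 2))
  have hρmeas : Measurable ρ :=
    (Real.continuous_rpow_const hp.le).measurable.comp (measurable_const_mul 2)
  -- affine map T
  set L : (Fin m → ℝ) →L[ℝ] (Fin m → ℝ) := LinearMap.toContinuousLinearMap (Matrix.toLin' A)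
    with hL_def
  set T : (Fin m → ℝ) → (Fin m → ℝ) := fun y => μ + A *ᵥ y with hT_def
  have hTL : ∀ y, T y = μ + L y := by
    intro y; simp [hT_def, hL_def, Matrix.toLin'_apply]
  have hTderiv : ∀ y, HasFDerivAt T L y := by
    intro y
    have : HasFDerivAt (fun y => μ + L y) L y := (L.hasFDerivAt).const_add μ
    simpa [← hTL] using this
  have hTmeas : Measurable T := by
    have : Continuous T := by
      simp only [funext hTL]; exact continuous_const.add L.continuous
    exact this.measurable
  have hTinj : Function.Injective T := by
    intro y z h
    have h2 : A *ᵥ y = A *ᵥ z := by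
      have := h; simpa [hT_def] using this
    have := congrArg (fun v => A⁻¹ *ᵥ v) h2
    simpa [Matrix.mulVec_mulVec, Matrix.nonsing_inv_mul A hAunit] using this
  have hTsurj : Function.Surjective T := by
    intro x
    refine ⟨A⁻¹ *ᵥ (x - μ), ?_⟩
    simp only [hT_def, Matrix.mulVec_mulVec, Matrix.mul_nonsing_inv A hAunit, Matrix.one_mulVec]
    abel
  have hLdet : L.det = A.det := by
    rw [hL_def, ContinuousLinearMap.det, LinearMap.coe_toContinuousLinearMap,
      LinearMap.det_toLin']
  have hφT : ∀ y, φ (T y) = ψ y := by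
    intro y
    have : T y - μ = A *ᵥ y := by simp [hT_def]
    simp only [hφ_def, hψ_def, this, key]
  -- step 1 : affine change of variables
  have step1 : ∀ u : Set (Fin m → ℝ), MeasurableSet u → ∀ g : (Fin m → ℝ) → ENNReal,
      ∫⁻ x in u, g x = ENNReal.ofReal (Real.sqrt S.det) * ∫⁻ y in T ⁻¹' u, g (T y) := by
    intro u hu g
    have him := lintegral_image_eq_lintegral_abs_det_fderiv_mul volume (hTmeas hu)
      (fun x _ => (hTderiv x).hasFDerivWithinAt) (hTinj.injOn) g
    rw [Set.image_preimage_eq u hTsurj] at him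
    rw [him, ← lintegral_const_mul' _ _ ENNReal.ofReal_ne_top]
    congr 1 with y
    rw [hLdet, hAdetabs]
  -- 1D facts
  have h2 : (0:ℝ) < 2 := two_pos
  have hm' : (0:ℝ) < m := by exact_mod_cast hm
  have ha_pos : 0 < a := by rw [ha_def]; positivity
  have hηpos : ∀ r : ℝ, 0 < r → 0 < η r := by
    intro r hr; simp only [hη_def]; positivity
  have hρpos : ∀ w : ℝ, 0 < w → 0 < ρ w := by
    intro w hw; simp only [hρ_def]; exact Real.rpow_pos_of_pos (by linarith) p
  have h2βp : 2 * β * p = 1 := by rw [hp_def]; field_simp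
  have hρη : ∀ r : ℝ, 0 < r → ρ (η r) = r := by
    intro r hr
    have h1 : 2 * ((1/2) * (r ^ 2) ^ β) = (r ^ 2) ^ β := by ring
    simp only [hρ_def, hη_def]
    rw [h1, ← Real.rpow_natCast r 2, ← Real.rpow_mul hr.le, ← Real.rpow_mul hr.le,
      show (2:ℕ) * β * p = 1 by exact_mod_cast h2βp, Real.rpow_one]
  have hηρ : ∀ w : ℝ, 0 < w → η (ρ w) = w := by
    intro w hw
    have h2w : (0:ℝ) < 2 * w := by linarith
    simp only [hη_def, hρ_def]
    rw [← Real.rpow_natCast ((2*w) ^ p) 2, ← Real.rpow_mul h2w.le, ← Real.rpow_mul h2w.le,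
      show p * (2:ℕ) * β = 1 by push_cast; rw [← h2βp]; ring, Real.rpow_one]
    ring
  -- density reformulation
  have hmggd_apply : ∀ u : Set (Fin m → ℝ), MeasurableSet u →
      mggd m μ S β u = ∫⁻ x in u, ENNReal.ofReal (c * Real.exp (-(φ x))) := by
    intro u hu
    rw [mggd, withDensity_apply _ hu]
    congr 1
    funext x
    simp only [hc_def, hφ_def, ha_def, neg_mul]
  -- Euclidean transfer setup
  haveI : Nonempty (Fin m) := ⟨⟨0, hm⟩⟩
  set e : EuclideanSpace ℝ (Fin m) ≃ᵐ (Fin m → ℝ) := (MeasurableEquiv.toLp 2 (Fin m → ℝ)).symm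
    with he_def
  have hvp : MeasurePreserving e volume volume :=
    EuclideanSpace.volume_preserving_symm_measurableEquiv_toLp (Fin m)
  have hψe : ∀ z : EuclideanSpace ℝ (Fin m), ψ (e z) = η ‖z‖ := by
    intro z
    have h1 : (e z) ⬝ᵥ (e z) = ‖z‖ ^ 2 := by
      rw [EuclideanSpace.norm_eq, Real.sq_sqrt (by positivity)]
      simp [dotProduct, he_def, sq]
    simp only [hψ_def, hη_def, h1]
  set G : ℝ → ENNReal := fun r => ENNReal.ofReal (c * Real.exp (-η r)) with hG_def
  have hGmeas : Measurable G :=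
    (measurable_const.mul (Real.measurable_exp.comp hηmeas.neg)).ennreal_ofReal
  have hdim : Module.finrank ℝ (EuclideanSpace ℝ (Fin m)) = m := by
    simp [finrank_euclideanSpace]
  haveI : Nontrivial (EuclideanSpace ℝ (Fin m)) := by
    apply Module.nontrivial_of_finrank_pos (R := ℝ)
    rw [hdim]; exact hm
  -- begin the computation
  refine Measure.ext fun s hs => ?_
  have hWmeas : MeasurableSet (η ⁻¹' s) := hηmeas hs
  have hsImeas : MeasurableSet (s ∩ Ioi 0) := hs.inter measurableSet_Ioi
  -- 1D image identity
  have hsets : η ⁻¹' s ∩ Ioi 0 = ρ '' (s ∩ Ioi 0) := by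
    ext r
    constructor
    · rintro ⟨hr1, hr2⟩
      exact ⟨η r, ⟨hr1, hηpos r hr2⟩, hρη r hr2⟩
    · rintro ⟨w, ⟨hws, hw0⟩, rfl⟩
      exact ⟨by rwa [Set.mem_preimage, hηρ w hw0], hρpos w hw0⟩
  have hinj : Set.InjOn ρ (s ∩ Ioi 0) := by
    intro w1 h1 w2 h2 h
    have := congrArg η h
    rwa [hηρ _ h1.2, hηρ _ h2.2] at this
  have hderiv : ∀ w ∈ s ∩ Ioi 0,
      HasDerivWithinAt ρ (p * (2*w) ^ (p - 1) * 2) (s ∩ Ioi 0) w := by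
    intro w hw
    have h2w : (2 : ℝ) * w ≠ 0 := by have := hw.2; simp only [Set.mem_Ioi] at this; positivity
    have h1 : HasDerivAt (fun t : ℝ => t ^ p) (p * (2*w) ^ (p - 1)) (2*w) := by
      exact Real.hasDerivAt_rpow_const (x := 2*w) (p := p) (Or.inl h2w)
    have h2 : HasDerivAt (fun w : ℝ => 2 * w) 2 w := by
      simpa using (hasDerivAt_id w).const_mul 2
    have := h1.comp w h2
    exact this.hasDerivWithinAt
  -- main calc
  calc Measure.map φ (mggd m μ S β) s
      = mggd m μ S β (φ ⁻¹' s) := Measure.map_apply hφmeas hs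
    _ = ∫⁻ x in φ ⁻¹' s, ENNReal.ofReal (c * Real.exp (-(φ x))) :=
        hmggd_apply _ (hφmeas hs)
    _ = ENNReal.ofReal (Real.sqrt S.det) *
          ∫⁻ y in T ⁻¹' (φ ⁻¹' s), ENNReal.ofReal (c * Real.exp (-(φ (T y)))) :=
        step1 _ (hφmeas hs) _
    _ = ENNReal.ofReal (Real.sqrt S.det) *
          ∫⁻ y in ψ ⁻¹' s, ENNReal.ofReal (c * Real.exp (-(ψ y))) := by
        have hset : T ⁻¹' (φ ⁻¹' s) = ψ ⁻¹' s := by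
          ext y; simp [Set.mem_preimage, hφT y]
        rw [hset]
        congr 1
        refine lintegral_congr fun y => ?_
        rw [hφT y]
    _ = ENNReal.ofReal (Real.sqrt S.det) *
          ∫⁻ z : EuclideanSpace ℝ (Fin m), ((η ⁻¹' s).indicator G) ‖z‖ := by
        congr 1
        rw [← hvp.setLIntegral_comp_preimage_emb e.measurableEmbedding
          (fun y => ENNReal.ofReal (c * Real.exp (-(ψ y)))) (ψ ⁻¹' s)]
        have hset2 : e ⁻¹' (ψ ⁻¹' s) = (fun z : EuclideanSpace ℝ (Fin m) => ‖z‖) ⁻¹' (η ⁻¹' s) := by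
          ext z; simp [Set.mem_preimage, hψe z]
        rw [hset2, ← lintegral_indicator (measurable_norm hWmeas) _]
        refine lintegral_congr fun z => ?_
        have h3 : (fun z : EuclideanSpace ℝ (Fin m) =>
            ENNReal.ofReal (c * Real.exp (-(ψ (e z))))) = G ∘ (fun z => ‖z‖) := by
          funext z
          simp only [hG_def, Function.comp, hψe z]
        rw [h3, Set.indicator_comp_right]
    _ = ENNReal.ofReal (Real.sqrt S.det) * ((m : ENNReal) *
          volume (ball (0 : EuclideanSpace ℝ (Fin m)) 1) *
          ∫⁻ r in Ioi (0:ℝ), ENNReal.ofReal (r ^ (m - 1)) * ((η ⁻¹' s).indicator G) r) := by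
        rw [lintegral_fun_norm_addHaar' volume _ (hGmeas.indicator hWmeas), hdim]
    _ = ENNReal.ofReal (Real.sqrt S.det) * ((m : ENNReal) *
          volume (ball (0 : EuclideanSpace ℝ (Fin m)) 1) *
          ∫⁻ r in η ⁻¹' s ∩ Ioi 0, ENNReal.ofReal (r ^ (m - 1)) * G r) := by
        congr 2
        have hpt : ∀ r : ℝ, ENNReal.ofReal (r ^ (m-1)) * ((η ⁻¹' s).indicator G) r
            = (η ⁻¹' s).indicator (fun r => ENNReal.ofReal (r ^ (m-1)) * G r) r := by
          intro r
          by_cases h : r ∈ η ⁻¹' s <;> simp [h]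
        rw [lintegral_congr hpt, lintegral_indicator hWmeas, Measure.restrict_restrict hWmeas]
    _ = ENNReal.ofReal (Real.sqrt S.det) * ((m : ENNReal) *
          volume (ball (0 : EuclideanSpace ℝ (Fin m)) 1) *
          ∫⁻ w in s ∩ Ioi 0, ENNReal.ofReal |p * (2*w) ^ (p-1) * 2| *
            (ENNReal.ofReal ((ρ w) ^ (m - 1)) * G (ρ w))) := by
        rw [hsets]
        have hjac := lintegral_image_eq_lintegral_abs_det_fderiv_mul volume hsImeas
          (fun w hw => (hderiv w hw).hasFDerivWithinAt) hinj
          (fun r => ENNReal.ofReal (r ^ (m - 1)) * G r)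
        simp only [ContinuousLinearMap.det_toSpanSingleton] at hjac
        rw [hjac]
    _ = ∫⁻ w in s ∩ Ioi 0, ENNReal.ofReal (w ^ (a-1) * Real.exp (-w) / Real.Gamma a) := by
        have hVb : volume (ball (0 : EuclideanSpace ℝ (Fin m)) 1)
            = ENNReal.ofReal (Real.sqrt Real.pi ^ m / Real.Gamma ((m:ℝ)/2 + 1)) := by
          rw [EuclideanSpace.volume_ball, Fintype.card_fin]
          simp
        have hG1 : (0:ℝ) < Real.Gamma ((m:ℝ)/2) := Real.Gamma_pos_of_pos (by positivity)
        have hGa : (0:ℝ) < Real.Gamma a := Real.Gamma_pos_of_pos ha_pos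
        have hP : (0:ℝ) < Real.pi ^ ((m:ℝ)/2) := Real.rpow_pos_of_pos Real.pi_pos _
        have hd : (0:ℝ) < Real.sqrt S.det := Real.sqrt_pos.2 hSdet_pos
        have ht : (0:ℝ) < (2:ℝ) ^ (a-1) := Real.rpow_pos_of_pos two_pos _
        have hVb0 : (0:ℝ) ≤ Real.sqrt Real.pi ^ m / Real.Gamma ((m:ℝ)/2 + 1) := by
          have := Real.Gamma_pos_of_pos (show (0:ℝ) < (m:ℝ)/2 + 1 by positivity)
          positivity
        have e2 : Real.sqrt Real.pi ^ m = Real.pi ^ ((m:ℝ)/2) := by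
          rw [Real.sqrt_eq_rpow, ← Real.rpow_natCast (Real.pi ^ ((1:ℝ)/2)) m,
            ← Real.rpow_mul Real.pi_nonneg]
          congr 1
          ring
        have e3 : Real.Gamma ((m:ℝ)/2 + 1) = ((m:ℝ)/2) * Real.Gamma ((m:ℝ)/2) :=
          Real.Gamma_add_one (by positivity)
        have e4 : (2:ℝ) ^ a = 2 * 2 ^ (a-1) := by
          have h := Real.rpow_add (two_pos (α := ℝ)) 1 (a-1)
          rw [Real.rpow_one, show (1:ℝ) + (a-1) = a by ring] at h
          exact h
        rw [hVb, ← ENNReal.ofReal_natCast m, ← ENNReal.ofReal_mul (by positivity),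
          ← lintegral_const_mul' _ _ ENNReal.ofReal_ne_top,
          ← lintegral_const_mul' _ _ ENNReal.ofReal_ne_top]
        refine setLIntegral_congr_fun hsImeas (fun w hw => ?_)
        have hw2 : (0:ℝ) < w := hw.2
        have h2w : (0:ℝ) < 2 * w := by linarith
        have hX : (0:ℝ) < (2*w) ^ (p-1) := Real.rpow_pos_of_pos h2w _
        have hY : (0:ℝ) < ((2*w) ^ p) ^ (m-1) := pow_pos (Real.rpow_pos_of_pos h2w _) _
        have habs : |p * (2*w) ^ (p-1) * 2| = p * (2*w) ^ (p-1) * 2 :=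
          abs_of_pos (by positivity)
        have hGρ : G (ρ w) = ENNReal.ofReal (c * Real.exp (-w)) := by
          simp only [hG_def, hηρ w hw2]
        have hρw : ρ w = (2*w) ^ p := by simp only [hρ_def]
        rw [hGρ, habs, hρw,
          ← ENNReal.ofReal_mul (le_of_lt hY),
          ← ENNReal.ofReal_mul (by positivity),
          ← ENNReal.ofReal_mul (by positivity),
          ← ENNReal.ofReal_mul (Real.sqrt_nonneg _)]
        refine congrArg ENNReal.ofReal ?_
        -- the real computation
        have hXY : ((2*w) ^ p) ^ (m-1) * (2*w) ^ (p-1) = 2 ^ (a-1) * w ^ (a-1) := by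
          rw [← Real.rpow_natCast ((2*w) ^ p) (m-1), ← Real.rpow_mul h2w.le,
            ← Real.rpow_add h2w,
            show p * ((m-1 : ℕ):ℝ) + (p-1) = a - 1 by
              rw [Nat.cast_sub hm, Nat.cast_one, ← hpm]; ring,
            Real.mul_rpow (by norm_num) hw2.le]
        have hYval : ((2*w) ^ p) ^ (m-1)
            = 2 ^ (a-1) * w ^ (a-1) / (2*w) ^ (p-1) := by
          rw [← hXY, mul_div_assoc, div_self hX.ne', mul_one]
        rw [e2, e3, hc_def, e4, hYval, hp_def]
        field_simp
    _ = ((volume.restrict (Ioi 0)).withDensity fun w => ENNReal.ofReal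
          (w ^ (a - 1) * Real.exp (-w) / Real.Gamma a)) s := by
        rw [withDensity_apply _ hs, Measure.restrict_restrict hs]
end
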